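/- arXiv:1401.5194 — 4 statements merged into one kernel-verified Lean document; each statement's English description precedes it below -/
import Mathlib

section
/- For any joint distribution Q_{XY} on finite sets X × Y and any finite set M of syndromes, the probability of correctly guessing X from (Y, M) where M is generated by any channel from X, satisfies p_guess(X|YM) ≤ |M| · p_guess(X|Y). -/
open scoped BigOperators
noncomputable section

/-- for any joint distribution `Q` on `X × Y` and any channel
`e : X → P(M)`, the guessing probability of `X` from `(Y, M)` satisfies
`p_guess(X|YM) ≤ |M| · p_guess(X|Y)`. -/
theorem pguess_side_info_bound {X Y M : Type*} [Fintype X] [Nonempty X]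
    [Fintype Y] [Fintype M]
    (Q : X → Y → ℝ) (hQ0 : ∀ x y, 0 ≤ Q x y) (hQ1 : ∑ x, ∑ y, Q x y = 1)
    (e : X → M → ℝ) (he0 : ∀ x m, 0 ≤ e x m) (he1 : ∀ x, ∑ m, e x m = 1) :
    (∑ y : Y, ∑ m : M,
        Finset.univ.sup' Finset.univ_nonempty (fun x => Q x y * e x m))
      ≤ (Fintype.card M : ℝ) *
        ∑ y : Y, Finset.univ.sup' Finset.univ_nonempty (fun x => Q x y) := by
  rw [Finset.mul_sum]
  apply Finset.sum_le_sum
  intro y _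
  have h : ∀ m : M,
      Finset.univ.sup' Finset.univ_nonempty (fun x => Q x y * e x m)
        ≤ Finset.univ.sup' Finset.univ_nonempty (fun x => Q x y) := by
    intro m
    apply Finset.sup'_le
    intro x _
    have hex : e x m ≤ 1 := by
      rw [← he1 x]
      exact Finset.single_le_sum (fun i _ => he0 x i) (Finset.mem_univ m)
    calc Q x y * e x m ≤ Q x y := mul_le_of_le_one_right (hQ0 x y) hex
      _ ≤ _ := Finset.le_sup' (fun x => Q x y) (Finset.mem_univ x)
  calc (∑ m : M, Finset.univ.sup' Finset.univ_nonempty (fun x => Q x y * e x m))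
      ≤ ∑ _m : M, Finset.univ.sup' Finset.univ_nonempty (fun x => Q x y) :=
        Finset.sum_le_sum (fun m _ => h m)
    _ = (Fintype.card M : ℝ) * _ := by
        rw [Finset.sum_const, Finset.card_univ, nsmul_eq_mul]
end
end

section
/- One-shot converse with uniform reference: any ε-correct one-way IR code for P_{XY} on finite alphabets X, Y satisfies log|M| ≥ log|X| - D_s^{ε+δ}(P_{XY} ‖ U_X × P_Y) + log δ for any δ ∈ (0, 1-ε), where U_X is the uniform distribution on X and P_Y is the Y-marginal of P_{XY}. -/
open scoped BigOperators
noncomputable section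

/-- ε-information spectrum for joint distributions on `X × Y` (curried form). -/
def DsJ {X Y : Type*} [Fintype X] [Fintype Y] (ε : ℝ) (P Q : X → Y → ℝ) : ℝ :=
  sSup {R : ℝ | (∑ x, ∑ y, if Real.log (P x y / Q x y) ≤ R then P x y else 0) ≤ ε}

/-- one-shot converse with uniform reference distribution: any
ε-correct one-way IR code for `P_{XY}` satisfies
`log|M| ≥ log|X| - D_s^{ε+δ}(P_{XY} ‖ U_X × P_Y) + log δ`. -/
theorem one_shot_converse_IR_uniform {X Y M : Type*} [Fintype X] [Nonempty X]
    [Fintype Y] [Fintype M]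
    (ε δ : ℝ) (hε0 : 0 < ε) (hε1 : ε < 1) (hδ0 : 0 < δ) (hδ1 : δ < 1 - ε)
    (P : X → Y → ℝ) (hP0 : ∀ x y, 0 ≤ P x y) (hP1 : ∑ x, ∑ y, P x y = 1)
    (e : X → M → ℝ) (he0 : ∀ x m, 0 ≤ e x m) (he1 : ∀ x, ∑ m, e x m = 1)
    (d : Y → M → X → ℝ) (hd0 : ∀ y m x, 0 ≤ d y m x) (hd1 : ∀ y m, ∑ x, d y m x = 1)
    (hcorrect : 1 - ε ≤ ∑ x, ∑ y, ∑ m, P x y * e x m * d y m x) :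
    Real.log (Fintype.card X)
      - DsJ (ε + δ) P (fun _ y => (Fintype.card X : ℝ)⁻¹ * ∑ x', P x' y)
      + Real.log δ ≤ Real.log (Fintype.card M) := by
  classical
  have hMne : Nonempty M := by
    by_contra h
    rw [not_nonempty_iff] at h
    have := he1 (Classical.arbitrary X)
    simp at this
  have hcX : (0:ℝ) < Fintype.card X := by exact_mod_cast Fintype.card_pos
  have hcM : (0:ℝ) < Fintype.card M := by exact_mod_cast Fintype.card_pos
  set Q : X → Y → ℝ := fun _ y => (Fintype.card X : ℝ)⁻¹ * ∑ x', P x' y with hQdef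
  set c : ℝ := δ * Fintype.card X / Fintype.card M with hcdef
  have hc0 : 0 < c := by positivity
  have heb : ∀ x m, e x m ≤ 1 := by
    intro x m
    calc e x m ≤ ∑ m', e x m' :=
          Finset.single_le_sum (fun m' _ => he0 x m') (Finset.mem_univ m)
      _ = 1 := he1 x
  have hdb : ∀ y m x, d y m x ≤ 1 := by
    intro y m x
    calc d y m x ≤ ∑ x', d y m x' :=
          Finset.single_le_sum (fun x' _ => hd0 y m x') (Finset.mem_univ x)
      _ = 1 := hd1 y m
  have hPY0 : ∀ y, 0 ≤ ∑ x', P x' y := fun y => Finset.sum_nonneg fun x _ => hP0 x y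
  set f : X → Y → ℝ := fun x y => ∑ m, e x m * d y m x with hfdef
  have hf0 : ∀ x y, 0 ≤ f x y := fun x y =>
    Finset.sum_nonneg fun m _ => mul_nonneg (he0 x m) (hd0 y m x)
  have hf1 : ∀ x y, f x y ≤ 1 := by
    intro x y
    calc f x y ≤ ∑ m, e x m := by
          apply Finset.sum_le_sum
          intro m _
          nlinarith [he0 x m, hd0 y m x, hdb y m x]
      _ = 1 := he1 x
  -- pointwise bound
  have hpt : ∀ x y, (if Real.log (P x y / Q x y) ≤ Real.log c then P x y else 0)
      ≤ (δ / Fintype.card M) * (∑ x', P x' y) * f x y + P x y * (1 - f x y) := by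
    intro x y
    split_ifs with hcond
    · have hkey : P x y ≤ (δ / Fintype.card M) * (∑ x', P x' y) := by
        rcases eq_or_lt_of_le (hP0 x y) with h0 | h0
        · rw [← h0]
          have := hPY0 y
          positivity
        · have hPle : P x y ≤ ∑ x', P x' y :=
            Finset.single_le_sum (fun x' _ => hP0 x' y) (Finset.mem_univ x)
          have hQ0 : 0 < Q x y := by
            simp only [hQdef]
            have : 0 < ∑ x', P x' y := lt_of_lt_of_le h0 hPle
            positivity
          have hratio : P x y / Q x y ≤ c := by
            have h := Real.exp_le_exp.mpr hcond
            rwa [Real.exp_log (div_pos h0 hQ0), Real.exp_log hc0] at h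
          have hPc : P x y ≤ c * Q x y := (div_le_iff₀ hQ0).mp hratio
          have hQeq : c * Q x y = (δ / Fintype.card M) * (∑ x', P x' y) := by
            simp only [hQdef, hcdef]
            field_simp
          linarith [hPc, hQeq.le]
      have hprod : 0 ≤ f x y * ((δ / Fintype.card M) * (∑ x', P x' y) - P x y) :=
        mul_nonneg (hf0 x y) (sub_nonneg.mpr hkey)
      nlinarith [hprod]
    · have h1 : 0 ≤ (δ / Fintype.card M) * (∑ x', P x' y) * f x y := by
        have := hPY0 y; have := hf0 x y; positivity
      have h2 : 0 ≤ P x y * (1 - f x y) :=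
        mul_nonneg (hP0 x y) (by linarith [hf1 x y])
      linarith
  -- sum over x of f is at most |M|
  have hsumf : ∀ y, ∑ x, f x y ≤ Fintype.card M := by
    intro y
    have : ∑ x, f x y = ∑ m, ∑ x, e x m * d y m x := Finset.sum_comm
    rw [this]
    calc ∑ m, ∑ x, e x m * d y m x ≤ ∑ m : M, (1:ℝ) := by
          apply Finset.sum_le_sum
          intro m _
          calc ∑ x, e x m * d y m x ≤ ∑ x, d y m x := by
                apply Finset.sum_le_sum
                intro x' _
                exact mul_le_of_le_one_left (hd0 y m x') (heb x' m)
            _ = 1 := hd1 y m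
      _ = Fintype.card M := by simp
  -- main membership bound
  have hmain : (∑ x, ∑ y, if Real.log (P x y / Q x y) ≤ Real.log c then P x y else 0)
      ≤ ε + δ := by
    have step1 : (∑ x, ∑ y, if Real.log (P x y / Q x y) ≤ Real.log c then P x y else 0)
        ≤ ∑ x, ∑ y, ((δ / Fintype.card M) * (∑ x', P x' y) * f x y
            + P x y * (1 - f x y)) :=
      Finset.sum_le_sum fun x _ => Finset.sum_le_sum fun y _ => hpt x y
    have hsplit : ∑ x, ∑ y, ((δ / Fintype.card M) * (∑ x', P x' y) * f x y
            + P x y * (1 - f x y))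
        = (∑ x, ∑ y, (δ / Fintype.card M) * (∑ x', P x' y) * f x y)
          + (∑ x, ∑ y, P x y * (1 - f x y)) := by
      rw [← Finset.sum_add_distrib]
      exact Finset.sum_congr rfl fun x _ => by rw [← Finset.sum_add_distrib]
    have hS1 : (∑ x, ∑ y, (δ / Fintype.card M) * (∑ x', P x' y) * f x y) ≤ δ := by
      have hcomm : (∑ x, ∑ y, (δ / Fintype.card M) * (∑ x', P x' y) * f x y)
          = ∑ y, (δ / Fintype.card M) * (∑ x', P x' y) * (∑ x, f x y) := by
        rw [Finset.sum_comm]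
        exact Finset.sum_congr rfl fun y _ => (Finset.mul_sum _ _ _).symm
      rw [hcomm]
      have hb : ∀ y, (δ / Fintype.card M) * (∑ x', P x' y) * (∑ x, f x y)
          ≤ (δ / Fintype.card M) * (∑ x', P x' y) * Fintype.card M := by
        intro y
        apply mul_le_mul_of_nonneg_left (hsumf y)
        have := hPY0 y
        positivity
      calc ∑ y, (δ / Fintype.card M) * (∑ x', P x' y) * (∑ x, f x y)
          ≤ ∑ y, (δ / Fintype.card M) * (∑ x', P x' y) * Fintype.card M :=
            Finset.sum_le_sum fun y _ => hb y
        _ = (δ / Fintype.card M) * Fintype.card M * ∑ y, ∑ x', P x' y := by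
            rw [Finset.mul_sum]; exact Finset.sum_congr rfl fun y _ => by ring
        _ = δ := by
            rw [Finset.sum_comm, hP1]
            field_simp
    have hS2 : (∑ x, ∑ y, P x y * (1 - f x y)) ≤ ε := by
      have hexp : (∑ x, ∑ y, P x y * (1 - f x y))
          = (∑ x, ∑ y, P x y) - ∑ x, ∑ y, P x y * f x y := by
        rw [← Finset.sum_sub_distrib]
        refine Finset.sum_congr rfl fun x _ => ?_
        rw [← Finset.sum_sub_distrib]
        exact Finset.sum_congr rfl fun y _ => by ring
      have hPf : (∑ x, ∑ y, P x y * f x y)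
          = ∑ x, ∑ y, ∑ m, P x y * e x m * d y m x := by
        refine Finset.sum_congr rfl fun x _ => Finset.sum_congr rfl fun y _ => ?_
        simp only [hfdef, Finset.mul_sum]
        exact Finset.sum_congr rfl fun m _ => by ring
      rw [hexp, hP1, hPf]
      linarith [hcorrect]
    linarith [step1, hsplit.le, hS1, hS2]
  -- the set is bounded above
  have hbdd : BddAbove {R : ℝ |
      (∑ x, ∑ y, if Real.log (P x y / Q x y) ≤ R then P x y else 0) ≤ ε + δ} := by
    refine ⟨∑ x, ∑ y, |Real.log (P x y / Q x y)|, ?_⟩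
    intro R hR
    rw [Set.mem_setOf_eq] at hR
    by_contra hlt
    push_neg at hlt
    have hall : ∀ x y, Real.log (P x y / Q x y) ≤ R := by
      intro x y
      have h1 : |Real.log (P x y / Q x y)| ≤ ∑ y', |Real.log (P x y' / Q x y')| :=
        Finset.single_le_sum (f := fun y' => |Real.log (P x y' / Q x y')|)
          (fun y' _ => abs_nonneg _) (Finset.mem_univ y)
      have h2 : (∑ y', |Real.log (P x y' / Q x y')|)
          ≤ ∑ x', ∑ y', |Real.log (P x' y' / Q x' y')| :=
        Finset.single_le_sum (f := fun x' => ∑ y', |Real.log (P x' y' / Q x' y')|)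
          (fun x' _ => Finset.sum_nonneg fun y' _ => abs_nonneg _) (Finset.mem_univ x)
      have := le_abs_self (Real.log (P x y / Q x y))
      linarith
    have hone : (∑ x, ∑ y, if Real.log (P x y / Q x y) ≤ R then P x y else 0) = 1 := by
      rw [← hP1]
      exact Finset.sum_congr rfl fun x _ =>
        Finset.sum_congr rfl fun y _ => if_pos (hall x y)
    rw [hone] at hR
    linarith
  have hDs : Real.log c ≤ DsJ (ε + δ) P Q := by
    unfold DsJ
    exact le_csSup hbdd hmain
  have hlogc : Real.log c
      = Real.log δ + Real.log (Fintype.card X) - Real.log (Fintype.card M) := by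
    rw [hcdef, Real.log_div (by positivity) (ne_of_gt hcM),
      Real.log_mul (ne_of_gt hδ0) (ne_of_gt hcX)]
  linarith [hDs, hlogc.le]
end
end

section
/- Deterministic-case converse (degenerate variance): if V(X|Y)_P = 0, then any ε-correct one-way IR code on the n-fold i.i.d. distribution (P_{XY})^{×n} satisfies log|M| ≥ n H(X|Y)_P + log(1-ε). -/
open scoped BigOperators
noncomputable section

/-- Conditional entropy `H(X|Y)_P = Σ_{x,y} P(x,y) log(P_Y(y)/P(x,y))`. -/
def condH {X Y : Type*} [Fintype X] [Fintype Y] (P : X → Y → ℝ) : ℝ :=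
  ∑ x, ∑ y, P x y * Real.log ((∑ x', P x' y) / P x y)

/-- Conditional entropy variance `V(X|Y)_P`. -/
def condV {X Y : Type*} [Fintype X] [Fintype Y] (P : X → Y → ℝ) : ℝ :=
  ∑ x, ∑ y, P x y * (Real.log ((∑ x', P x' y) / P x y) - condH P)^2

/-- deterministic-case converse. If `V(X|Y)_P = 0`, then any
ε-correct one-way IR code on the n-fold i.i.d. distribution `(P_{XY})^{×n}`
satisfies `log|M| ≥ n H(X|Y)_P + log(1-ε)`. -/
theorem converse_IR_zero_variance {X Y M : Type*} [Fintype X] [Fintype Y] [Fintype M]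
    (n : ℕ) (ε : ℝ) (hε0 : 0 < ε) (hε1 : ε < 1)
    (P : X → Y → ℝ) (hP0 : ∀ x y, 0 ≤ P x y) (hP1 : ∑ x, ∑ y, P x y = 1)
    (hV : condV P = 0)
    (e : (Fin n → X) → M → ℝ) (he0 : ∀ xs m, 0 ≤ e xs m) (he1 : ∀ xs, ∑ m, e xs m = 1)
    (d : (Fin n → Y) → M → (Fin n → X) → ℝ) (hd0 : ∀ ys m xs, 0 ≤ d ys m xs)
    (hd1 : ∀ ys m, ∑ xs, d ys m xs = 1)
    (hcorrect : 1 - ε ≤ ∑ xs : Fin n → X, ∑ ys : Fin n → Y, ∑ m : M,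
      (∏ i, P (xs i) (ys i)) * e xs m * d ys m xs) :
    n * condH P + Real.log (1 - ε) ≤ Real.log (Fintype.card M) := by
  set H := condH P with hH
  set S : Y → ℝ := fun y => ∑ x', P x' y with hS
  have hS0 : ∀ y, 0 ≤ S y := fun y => Finset.sum_nonneg fun x _ => hP0 x y
  have hS1 : ∑ y, S y = 1 := by
    rw [← hP1]; exact Finset.sum_comm
  -- from zero variance: each term of condV is zero
  have hzero : ∀ x y, P x y * (Real.log (S y / P x y) - H)^2 = 0 := by
    intro x y
    have h1 : ∀ x' ∈ (Finset.univ : Finset X),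
        0 ≤ ∑ y', P x' y' * (Real.log (S y' / P x' y') - H)^2 := by
      intro x' _
      exact Finset.sum_nonneg fun y' _ => mul_nonneg (hP0 x' y') (sq_nonneg _)
    have h2 := (Finset.sum_eq_zero_iff_of_nonneg h1).mp hV x (Finset.mem_univ x)
    have h3 : ∀ y' ∈ (Finset.univ : Finset Y),
        0 ≤ P x y' * (Real.log (S y' / P x y') - H)^2 := by
      intro y' _; exact mul_nonneg (hP0 x y') (sq_nonneg _)
    exact (Finset.sum_eq_zero_iff_of_nonneg h3).mp h2 y (Finset.mem_univ y)
  -- key pointwise bound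
  have hkey : ∀ x y, P x y ≤ Real.exp (-H) * S y := by
    intro x y
    rcases eq_or_lt_of_le (hP0 x y) with h0 | hpos
    · rw [← h0]; exact mul_nonneg (Real.exp_pos _).le (hS0 y)
    · have hterm := hzero x y
      have hsq : (Real.log (S y / P x y) - H)^2 = 0 := by
        rcases mul_eq_zero.mp hterm with h | h
        · exact absurd h (ne_of_gt hpos)
        · exact h
      have hlog : Real.log (S y / P x y) = H := by
        have := pow_eq_zero_iff (n := 2) (by norm_num) |>.mp hsq
        linarith
      have hSy : 0 < S y := lt_of_lt_of_le hpos (Finset.single_le_sum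
        (fun x' _ => hP0 x' y) (Finset.mem_univ x))
      have hq : S y / P x y = Real.exp H := by
        rw [← hlog, Real.exp_log (div_pos hSy hpos)]
      have : S y = Real.exp H * P x y := by
        field_simp at hq; linarith [hq]
      rw [this, Real.exp_neg]
      rw [← mul_assoc, inv_mul_cancel₀ (Real.exp_ne_zero H), one_mul]
  -- product bound
  have hprod : ∀ (xs : Fin n → X) (ys : Fin n → Y),
      (∏ i, P (xs i) (ys i)) ≤ Real.exp (-H)^n * ∏ i, S (ys i) := by
    intro xs ys
    calc (∏ i, P (xs i) (ys i)) ≤ ∏ i, (Real.exp (-H) * S (ys i)) := by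
          apply Finset.prod_le_prod (fun i _ => hP0 _ _) (fun i _ => hkey _ _)
      _ = Real.exp (-H)^n * ∏ i, S (ys i) := by
          rw [Finset.prod_mul_distrib, Finset.prod_const, Finset.card_univ,
            Fintype.card_fin]
  -- main bound on the success probability
  have hmain : 1 - ε ≤ Real.exp (-H)^n * Fintype.card M := by
    calc 1 - ε ≤ ∑ xs : Fin n → X, ∑ ys : Fin n → Y, ∑ m : M,
          (∏ i, P (xs i) (ys i)) * e xs m * d ys m xs := hcorrect
      _ ≤ ∑ xs : Fin n → X, ∑ ys : Fin n → Y, ∑ m : M,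
          (Real.exp (-H)^n * ∏ i, S (ys i)) * d ys m xs := by
          apply Finset.sum_le_sum; intro xs _
          apply Finset.sum_le_sum; intro ys _
          apply Finset.sum_le_sum; intro m _
          have he_le : e xs m ≤ 1 := by
            rw [← he1 xs]
            exact Finset.single_le_sum (fun m' _ => he0 xs m') (Finset.mem_univ m)
          have h1 : (∏ i, P (xs i) (ys i)) * e xs m ≤
              (Real.exp (-H)^n * ∏ i, S (ys i)) * 1 := by
            apply mul_le_mul (hprod xs ys) he_le (he0 xs m)
            exact mul_nonneg (by positivity) (Finset.prod_nonneg fun i _ => hS0 _)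
          rw [mul_one] at h1
          exact mul_le_mul_of_nonneg_right h1 (hd0 ys m xs)
      _ = ∑ ys : Fin n → Y, ∑ m : M, ∑ xs : Fin n → X,
          (Real.exp (-H)^n * ∏ i, S (ys i)) * d ys m xs := by
          rw [Finset.sum_comm]
          exact Finset.sum_congr rfl fun ys _ => Finset.sum_comm
      _ = ∑ ys : Fin n → Y, ∑ m : M, (Real.exp (-H)^n * ∏ i, S (ys i)) := by
          apply Finset.sum_congr rfl; intro ys _
          apply Finset.sum_congr rfl; intro m _
          rw [← Finset.mul_sum, hd1 ys m, mul_one]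
      _ = Real.exp (-H)^n * Fintype.card M := by
          have hY : ∑ ys : Fin n → Y, ∏ i, S (ys i) = 1 := by
            rw [← Fintype.piFinset_univ, ← Finset.prod_univ_sum]
            simp [hS1]
          simp only [Finset.sum_const, Finset.card_univ, nsmul_eq_mul]
          rw [← Finset.mul_sum, ← Finset.mul_sum, hY]
          ring
  -- conclude with logs
  have hε' : 0 < 1 - ε := by linarith
  have hcard : 0 < (Fintype.card M : ℝ) := by
    by_contra h
    push_neg at h
    have : Real.exp (-H)^n * (Fintype.card M : ℝ) ≤ 0 := by
      apply mul_nonpos_of_nonneg_of_nonpos (by positivity) h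
    linarith
  have hlog := Real.log_le_log hε' hmain
  rw [Real.log_mul (by positivity) (ne_of_gt hcard), Real.log_pow,
    Real.log_exp] at hlog
  linarith
end
end

section
/- Exact binomial converse: for 0 < ε < 1, 0 < Q < 1/2, and any n ≥ 1, every (ε,Q)-correct one-way IR code of block length n satisfies log|M| ≥ n h(Q) + ( n(1-Q) - F^{-1}(ε(1 + 1/√n); n, 1-Q) - 1 ) log((1-Q)/Q) - (1/2) log n - log(1/ε), provided ε(1+1/√n) < 1. -/
open scoped BigOperators
noncomputable section

/-- Binomial cumulative distribution function `F(k; n, p) = Σ_{ℓ=0}^k C(n,ℓ) pˡ (1-p)^{n-ℓ}`. -/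
def binomCDF (k n : ℕ) (p : ℝ) : ℝ :=
  ∑ ℓ ∈ Finset.range (k + 1), (n.choose ℓ : ℝ) * p ^ ℓ * (1 - p) ^ (n - ℓ)

/-- `F⁻¹(ε; n, p) = max{k ∈ ℕ | F(k; n, p) ≤ ε}`. -/
def binomCDFInv (ε : ℝ) (n : ℕ) (p : ℝ) : ℕ :=
  sSup {k : ℕ | binomCDF k n p ≤ ε}

/-- Binary entropy. -/
def binEnt (Q : ℝ) : ℝ := -(Q * Real.log Q) - (1 - Q) * Real.log (1 - Q)

section Aux
open Finset

lemma aux_sum_finset_card (n : ℕ) (f : ℕ → ℝ) :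
    ∑ s : Finset (Fin n), f s.card = ∑ j ∈ range (n+1), (n.choose j : ℝ) * f j := by
  have h0 : (univ : Finset (Finset (Fin n))) = (univ : Finset (Fin n)).powerset := by
    rw [Finset.powerset_univ]
  rw [h0, Finset.sum_powerset]
  refine Finset.sum_congr (by simp) fun j hj => ?_
  rw [Finset.sum_congr rfl (fun t ht => show f t.card = f j by
        rw [(Finset.mem_powersetCard.1 ht).2]),
      Finset.sum_const, Finset.card_powersetCard, Finset.card_univ, Fintype.card_fin,
      nsmul_eq_mul]

lemma aux_sum_bool_card (n : ℕ) (f : ℕ → ℝ) :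
    ∑ xs : Fin n → Bool, f ({i | xs i = true} : Finset (Fin n)).card
      = ∑ j ∈ range (n+1), (n.choose j : ℝ) * f j := by
  rw [← aux_sum_finset_card]
  refine (Fintype.sum_bijective (fun s : Finset (Fin n) => fun i => decide (i ∈ s)) ?_
    _ _ fun s => ?_).symm
  · constructor
    · intro s t h
      ext i
      have := congrFun h i
      simpa using this
    · intro xs
      refine ⟨({i | xs i = true} : Finset (Fin n)), funext fun i => ?_⟩
      simp
  · have hs : ({i | decide (i ∈ s) = true} : Finset (Fin n)) = s := by
      ext i; simp
    show f s.card = f ({i | decide (i ∈ s) = true} : Finset (Fin n)).card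
    rw [hs]

lemma aux_sum_agree_card (n : ℕ) (ys : Fin n → Bool) (f : ℕ → ℝ) :
    ∑ xs : Fin n → Bool, f ({i | xs i = ys i} : Finset (Fin n)).card
      = ∑ j ∈ range (n+1), (n.choose j : ℝ) * f j := by
  rw [← aux_sum_bool_card]
  refine Fintype.sum_bijective (fun xs : Fin n → Bool => fun i => xs i == ys i) ?_
    _ _ fun xs => ?_
  · apply Function.Involutive.bijective
    intro xs
    funext i
    show ((xs i == ys i) == ys i) = xs i
    cases xs i <;> cases ys i <;> rfl
  · have : ({i | (fun i => xs i == ys i) i = true} : Finset (Fin n))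
        = ({i | xs i = ys i} : Finset (Fin n)) := by
      ext i; simp
    rw [this]

lemma aux_binomCDF_mono {p : ℝ} (hp0 : 0 ≤ p) (hp1 : p ≤ 1) (n : ℕ) :
    Monotone (fun k => binomCDF k n p) := by
  apply monotone_nat_of_le_succ
  intro k
  simp only [binomCDF]
  rw [Finset.sum_range_succ (n := k + 1)]
  have : (0:ℝ) ≤ (n.choose (k+1) : ℝ) * p ^ (k+1) * (1 - p) ^ (n - (k+1)) :=
    mul_nonneg (mul_nonneg (by positivity) (by positivity)) (pow_nonneg (by linarith) _)
  linarith

lemma aux_binomCDF_ge {p : ℝ} {n k : ℕ} (hk : n ≤ k) :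
    binomCDF k n p = 1 := by
  have h1 : binomCDF k n p = binomCDF n n p := by
    unfold binomCDF
    rw [show k + 1 = (n+1) + (k - n) by omega, Finset.sum_range_add]
    have : ∀ j ∈ Finset.range (k - n),
        (n.choose (n + 1 + j) : ℝ) * p ^ (n+1+j) * (1-p) ^ (n - (n+1+j)) = 0 := by
      intro j _
      rw [Nat.choose_eq_zero_of_lt (by omega)]
      simp
    rw [Finset.sum_congr rfl this]
    simp
  rw [h1]
  unfold binomCDF
  have h2 := add_pow p (1 - p) n
  rw [add_sub_cancel] at h2
  calc ∑ ℓ ∈ Finset.range (n + 1), (n.choose ℓ : ℝ) * p ^ ℓ * (1 - p) ^ (n - ℓ)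
      = ∑ m ∈ Finset.range (n + 1), p ^ m * (1 - p) ^ (n - m) * (n.choose m : ℝ) :=
        Finset.sum_congr rfl fun j _ => by ring
    _ = (1:ℝ) ^ n := h2.symm
    _ = 1 := one_pow n

lemma aux_binomCDFInv_facts {p ε' : ℝ} (hp0 : 0 ≤ p) (hp1 : p ≤ 1) {n : ℕ} (hn : 1 ≤ n)
    (hε' : ε' < 1) :
    binomCDFInv ε' n p < n ∧ ε' < binomCDF (binomCDFInv ε' n p + 1) n p := by
  have hS : ∀ k ∈ {k : ℕ | binomCDF k n p ≤ ε'}, k < n := by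
    intro k hk
    by_contra h
    have h1 : binomCDF k n p = 1 := aux_binomCDF_ge (by omega)
    have h2 : binomCDF k n p ≤ ε' := hk
    rw [h1] at h2
    linarith
  have bdd : BddAbove {k : ℕ | binomCDF k n p ≤ ε'} :=
    ⟨n, fun k hk => (hS k hk).le⟩
  rcases Set.eq_empty_or_nonempty {k : ℕ | binomCDF k n p ≤ ε'} with he | hne
  · have h0 : binomCDFInv ε' n p = 0 := by
      rw [binomCDFInv, he]
      exact csSup_empty
    refine ⟨by omega, ?_⟩
    have h1 : ε' < binomCDF 0 n p := by
      by_contra h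
      have : (0:ℕ) ∈ {k : ℕ | binomCDF k n p ≤ ε'} := by
        simpa using not_lt.1 h
      rw [he] at this
      exact this
    rw [h0]
    exact lt_of_lt_of_le h1 (aux_binomCDF_mono hp0 hp1 n (by omega))
  · have hmem : binomCDFInv ε' n p ∈ {k : ℕ | binomCDF k n p ≤ ε'} :=
      Nat.sSup_mem hne bdd
    refine ⟨hS _ hmem, ?_⟩
    by_contra h
    have : binomCDFInv ε' n p + 1 ∈ {k : ℕ | binomCDF k n p ≤ ε'} := not_lt.1 h
    have := le_csSup bdd this
    rw [binomCDFInv] at this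
    omega

lemma aux_pow_far {u v : ℝ} (hu : 0 ≤ u) (huv : u ≤ v) {a b n : ℕ} (hab : a ≤ b)
    (hbn : b ≤ n) : v ^ a * u ^ (n - a) ≤ v ^ b * u ^ (n - b) := by
  have hv : 0 ≤ v := le_trans hu huv
  have h2 : u ^ (b - a) ≤ v ^ (b - a) := pow_le_pow_left₀ hu huv _
  calc v ^ a * u ^ (n - a) = (v ^ a * u ^ (b - a)) * u ^ (n - b) := by
        rw [show n - a = (b - a) + (n - b) by omega, pow_add]; ring
    _ ≤ (v ^ a * v ^ (b - a)) * u ^ (n - b) :=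
        mul_le_mul_of_nonneg_right (mul_le_mul_of_nonneg_left h2 (pow_nonneg hv a))
          (pow_nonneg hu _)
    _ = v ^ b * u ^ (n - b) := by rw [← pow_add, show a + (b - a) = b by omega]

end Aux

/-- exact binomial converse. For `0 < ε < 1`, `0 < Q < 1/2` and
`n ≥ 1`, every (ε,Q)-correct one-way IR code of block length `n` satisfies
`log|M| ≥ n h(Q) + (n(1-Q) - F⁻¹(ε(1+1/√n); n, 1-Q) - 1) log((1-Q)/Q)
  - (1/2) log n - log(1/ε)`, provided `ε(1+1/√n) < 1`. -/
theorem exact_binomial_converse {M : Type*} [Fintype M]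
    (n : ℕ) (hn : 1 ≤ n) (ε Q : ℝ) (hε0 : 0 < ε) (hε1 : ε < 1)
    (hQ0 : 0 < Q) (hQ1 : Q < 1/2)
    (hεn : ε * (1 + 1 / Real.sqrt n) < 1)
    (e : (Fin n → Bool) → M → ℝ) (he0 : ∀ xs m, 0 ≤ e xs m)
    (he1 : ∀ xs, ∑ m, e xs m = 1)
    (d : (Fin n → Bool) → M → (Fin n → Bool) → ℝ) (hd0 : ∀ ys m xs, 0 ≤ d ys m xs)
    (hd1 : ∀ ys m, ∑ xs, d ys m xs = 1)
    (hcorrect : 1 - ε ≤ ∑ xs : Fin n → Bool, ∑ ys : Fin n → Bool, ∑ m : M,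
      (∏ i, (if xs i = ys i then (1 - Q)/2 else Q/2)) * e xs m * d ys m xs) :
    n * binEnt Q
      + (n * (1 - Q) - (binomCDFInv (ε * (1 + 1 / Real.sqrt n)) n (1 - Q) : ℝ) - 1)
          * Real.log ((1 - Q) / Q)
      - (1/2) * Real.log n - Real.log (1/ε)
      ≤ Real.log (Fintype.card M) := by
  have hQ1' : Q < 1 := by linarith
  have h1Q0 : (0:ℝ) < 1 - Q := by linarith
  have hsqn : (0:ℝ) < Real.sqrt n := Real.sqrt_pos.2 (by positivity)
  set ε' : ℝ := ε * (1 + 1 / Real.sqrt n) with hε'def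
  have hε'1 : ε' < 1 := hεn
  set K : ℕ := binomCDFInv ε' n (1 - Q) with hKdef
  obtain ⟨hKn, hKF⟩ := aux_binomCDFInv_facts (p := 1 - Q) (by linarith) (by linarith) hn hε'1
  -- agreement count
  set a : (Fin n → Bool) → (Fin n → Bool) → ℕ :=
    fun xs ys => ({i | xs i = ys i} : Finset (Fin n)).card with hadef
  have ha_le : ∀ xs ys, a xs ys ≤ n := fun xs ys => by
    simpa using Finset.card_filter_le (Finset.univ : Finset (Fin n)) _
  -- product formula
  have w_eq : ∀ xs ys : Fin n → Bool,
      (∏ i, (if xs i = ys i then (1 - Q)/2 else Q/2))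
        = ((1-Q)/2) ^ (a xs ys) * (Q/2) ^ (n - a xs ys) := by
    intro xs ys
    rw [Finset.prod_ite, Finset.prod_const, Finset.prod_const]
    congr 2
    rw [show ({i | ¬ xs i = ys i} : Finset (Fin n)).card
          = n - ({i | xs i = ys i} : Finset (Fin n)).card from ?_]
    · have := Finset.card_filter_add_card_filter_not
        (s := (Finset.univ : Finset (Fin n))) (p := fun i => xs i = ys i)
      simp only [Finset.card_univ, Fintype.card_fin] at this
      omega
  -- bounds e, d ≤ 1
  have he_le : ∀ xs m, e xs m ≤ 1 := by
    intro xs m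
    rw [← he1 xs]
    exact Finset.single_le_sum (fun m _ => he0 xs m) (Finset.mem_univ m)
  -- key constants
  set Bp : ℝ := ((1-Q)/2) ^ (K+1) * (Q/2) ^ (n - (K+1)) with hBpdef
  have hBp0 : 0 < Bp := by positivity
  -- pointwise bound and summation
  have step1 : (1:ℝ) - ε ≤
      (∑ ys : Fin n → Bool, ∑ xs : Fin n → Bool,
        (if K + 2 ≤ a xs ys then ((1-Q)/2) ^ (a xs ys) * (Q/2) ^ (n - a xs ys) else 0))
      + Bp * (2^n * Fintype.card M) := by
    refine le_trans hcorrect ?_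
    have hd_le : ∀ ys m xs, d ys m xs ≤ 1 := by
      intro ys m xs
      rw [← hd1 ys m]
      exact Finset.single_le_sum (fun xs _ => hd0 ys m xs) (Finset.mem_univ xs)
    have hfar : ∀ xs ys : Fin n → Bool, ¬ (K + 2 ≤ a xs ys) →
        ((1-Q)/2) ^ (a xs ys) * (Q/2) ^ (n - a xs ys) ≤ Bp := by
      intro xs ys h
      exact aux_pow_far (u := Q/2) (v := (1-Q)/2) (by positivity) (by linarith)
        (by omega) (by omega)
    have hpt : ∀ (xs ys : Fin n → Bool) (m : M),
        (∏ i, (if xs i = ys i then (1 - Q)/2 else Q/2)) * e xs m * d ys m xs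
        ≤ (if K + 2 ≤ a xs ys then ((1-Q)/2) ^ (a xs ys) * (Q/2) ^ (n - a xs ys) else 0)
            * e xs m + Bp * (e xs m * d ys m xs) := by
      intro xs ys m
      rw [w_eq xs ys]
      by_cases h : K + 2 ≤ a xs ys
      · rw [if_pos h]
        have h1 : ((1-Q)/2) ^ (a xs ys) * (Q/2) ^ (n - a xs ys) * e xs m * d ys m xs
            ≤ ((1-Q)/2) ^ (a xs ys) * (Q/2) ^ (n - a xs ys) * e xs m :=
          mul_le_of_le_one_right (mul_nonneg (by positivity) (he0 xs m)) (hd_le ys m xs)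
        have h2 : 0 ≤ Bp * (e xs m * d ys m xs) :=
          mul_nonneg hBp0.le (mul_nonneg (he0 _ _) (hd0 _ _ _))
        linarith
      · rw [if_neg h, zero_mul, zero_add, mul_assoc]
        exact mul_le_mul_of_nonneg_right (hfar xs ys h)
          (mul_nonneg (he0 _ _) (hd0 _ _ _))
    have hEd : ∑ xs : Fin n → Bool, ∑ ys : Fin n → Bool, ∑ m : M, e xs m * d ys m xs
        ≤ 2^n * Fintype.card M := by
      calc ∑ xs : Fin n → Bool, ∑ ys : Fin n → Bool, ∑ m : M, e xs m * d ys m xs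
          = ∑ ys : Fin n → Bool, ∑ m : M, ∑ xs : Fin n → Bool, e xs m * d ys m xs := by
            rw [Finset.sum_comm]
            exact Finset.sum_congr rfl fun ys _ => Finset.sum_comm
        _ ≤ ∑ _ys : Fin n → Bool, ∑ _m : M, (1:ℝ) := by
            refine Finset.sum_le_sum fun ys _ => Finset.sum_le_sum fun m _ => ?_
            rw [← hd1 ys m]
            exact Finset.sum_le_sum fun xs _ =>
              mul_le_of_le_one_left (hd0 ys m xs) (he_le xs m)
        _ = 2^n * Fintype.card M := by
            simp [Finset.sum_const, Finset.card_univ, mul_comm]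
    calc ∑ xs : Fin n → Bool, ∑ ys : Fin n → Bool, ∑ m : M,
          (∏ i, (if xs i = ys i then (1 - Q)/2 else Q/2)) * e xs m * d ys m xs
        ≤ ∑ xs : Fin n → Bool, ∑ ys : Fin n → Bool, ∑ m : M,
            ((if K + 2 ≤ a xs ys then ((1-Q)/2) ^ (a xs ys) * (Q/2) ^ (n - a xs ys) else 0)
              * e xs m + Bp * (e xs m * d ys m xs)) :=
          Finset.sum_le_sum fun xs _ => Finset.sum_le_sum fun ys _ =>
            Finset.sum_le_sum fun m _ => hpt xs ys m
      _ = ∑ xs : Fin n → Bool, ∑ ys : Fin n → Bool,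
            ((if K + 2 ≤ a xs ys then ((1-Q)/2) ^ (a xs ys) * (Q/2) ^ (n - a xs ys) else 0)
              + Bp * ∑ m : M, e xs m * d ys m xs) := by
          refine Finset.sum_congr rfl fun xs _ => Finset.sum_congr rfl fun ys _ => ?_
          rw [Finset.sum_add_distrib, ← Finset.mul_sum, ← Finset.mul_sum, he1, mul_one]
      _ = (∑ xs : Fin n → Bool, ∑ ys : Fin n → Bool,
            (if K + 2 ≤ a xs ys then ((1-Q)/2) ^ (a xs ys) * (Q/2) ^ (n - a xs ys) else 0))
          + Bp * ∑ xs : Fin n → Bool, ∑ ys : Fin n → Bool, ∑ m : M, e xs m * d ys m xs := by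
          simp only [Finset.sum_add_distrib, ← Finset.mul_sum]
      _ ≤ (∑ ys : Fin n → Bool, ∑ xs : Fin n → Bool,
            (if K + 2 ≤ a xs ys then ((1-Q)/2) ^ (a xs ys) * (Q/2) ^ (n - a xs ys) else 0))
          + Bp * (2^n * Fintype.card M) := by
          rw [show (∑ xs : Fin n → Bool, ∑ ys : Fin n → Bool,
              (if K + 2 ≤ a xs ys then ((1-Q)/2) ^ (a xs ys) * (Q/2) ^ (n - a xs ys) else 0))
            = (∑ ys : Fin n → Bool, ∑ xs : Fin n → Bool,
              (if K + 2 ≤ a xs ys then ((1-Q)/2) ^ (a xs ys) * (Q/2) ^ (n - a xs ys) else 0))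
            from Finset.sum_comm]
          exact add_le_add (le_refl _) (mul_le_mul_of_nonneg_left hEd hBp0.le)
  have step2 : (∑ ys : Fin n → Bool, ∑ xs : Fin n → Bool,
        (if K + 2 ≤ a xs ys then ((1-Q)/2) ^ (a xs ys) * (Q/2) ^ (n - a xs ys) else 0))
      = 1 - binomCDF (K+1) n (1-Q) := by
    have hper : ∀ ys : Fin n → Bool,
        (∑ xs : Fin n → Bool,
          (if K + 2 ≤ a xs ys then ((1-Q)/2) ^ (a xs ys) * (Q/2) ^ (n - a xs ys) else 0))
        = ∑ j ∈ Finset.range (n+1), (n.choose j : ℝ) *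
            (if K + 2 ≤ j then ((1-Q)/2) ^ j * (Q/2) ^ (n - j) else 0) := by
      intro ys
      exact aux_sum_agree_card n ys
        (fun j => if K + 2 ≤ j then ((1-Q)/2) ^ j * (Q/2) ^ (n - j) else 0)
    rw [Finset.sum_congr rfl (fun ys _ => hper ys), Finset.sum_const, Finset.card_univ,
      show Fintype.card (Fin n → Bool) = 2^n by simp, nsmul_eq_mul]
    push_cast
    rw [Finset.mul_sum]
    have hterm : ∀ j ∈ Finset.range (n+1),
        (2:ℝ)^n * ((n.choose j : ℝ) *
            (if K + 2 ≤ j then ((1-Q)/2) ^ j * (Q/2) ^ (n - j) else 0))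
        = (if K + 2 ≤ j then (n.choose j : ℝ) * (1-Q)^j * Q^(n-j) else 0) := by
      intro j hj
      have hjn : j ≤ n := by
        have := Finset.mem_range.1 hj; omega
      by_cases h : K + 2 ≤ j
      · rw [if_pos h, if_pos h, div_pow, div_pow, div_mul_div_comm, ← pow_add,
          show j + (n - j) = n by omega]
        field_simp
      · rw [if_neg h, if_neg h]; ring
    rw [Finset.sum_congr rfl hterm]
    have hsum1 : ∑ j ∈ Finset.range (n+1), ((n.choose j : ℝ) * (1-Q)^j * Q^(n-j)) = 1 := by
      have h1 := aux_binomCDF_ge (p := 1-Q) (le_refl n)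
      unfold binomCDF at h1
      simp only [show (1:ℝ)-(1-Q) = Q by ring] at h1
      exact h1
    have hsum2 : ∑ j ∈ Finset.range (K+2), ((n.choose j : ℝ) * (1-Q)^j * Q^(n-j))
        = binomCDF (K+1) n (1-Q) := by
      unfold binomCDF
      simp only [show (1:ℝ)-(1-Q) = Q by ring]
    have hcons : ∑ j ∈ Finset.Ico 0 (K+2), ((n.choose j : ℝ) * (1-Q)^j * Q^(n-j))
          + ∑ j ∈ Finset.Ico (K+2) (n+1), ((n.choose j : ℝ) * (1-Q)^j * Q^(n-j))
        = ∑ j ∈ Finset.Ico 0 (n+1), ((n.choose j : ℝ) * (1-Q)^j * Q^(n-j)) :=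
      Finset.sum_Ico_consecutive _ (by omega) (by omega)
    have hIco : ∑ j ∈ Finset.range (n+1),
          (if K + 2 ≤ j then (n.choose j : ℝ) * (1-Q)^j * Q^(n-j) else 0)
        = ∑ j ∈ Finset.Ico (K+2) (n+1), ((n.choose j : ℝ) * (1-Q)^j * Q^(n-j)) := by
      rw [← Finset.sum_filter]
      congr 1
      ext j
      simp only [Finset.mem_filter, Finset.mem_range, Finset.mem_Ico]
      omega
    rw [hIco]
    rw [Finset.range_eq_Ico] at hsum1 hsum2
    linarith
  -- combine
  have hB2 : Bp * 2^n = (1-Q)^(K+1) * Q^(n-(K+1)) := by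
    rw [hBpdef, div_pow, div_pow, div_mul_div_comm, ← pow_add,
      show K+1+(n-(K+1)) = n by omega, div_mul_cancel₀ _ (by positivity : ((2:ℝ)^n) ≠ 0)]
  have key : ε / Real.sqrt n ≤ ((1-Q)^(K+1) * Q^(n-(K+1))) * Fintype.card M := by
    have h3 : 1 - ε ≤ (1 - binomCDF (K+1) n (1-Q)) + Bp * (2^n * Fintype.card M) := by
      rw [← step2]; exact step1
    have h4 : binomCDF (K+1) n (1-Q) - ε ≤ Bp * (2^n * Fintype.card M) := by linarith
    have h5 : ε' - ε ≤ Bp * (2^n * Fintype.card M) := le_trans (by linarith) h4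
    have h6 : ε' - ε = ε / Real.sqrt n := by
      rw [hε'def]; field_simp; ring
    rw [← hB2]
    calc ε / Real.sqrt n = ε' - ε := h6.symm
      _ ≤ Bp * (2^n * Fintype.card M) := h5
      _ = Bp * 2^n * Fintype.card M := by ring
  set B : ℝ := (1-Q)^(K+1) * Q^(n-(K+1)) with hBdef
  have hB0 : 0 < B := by positivity
  have hcard : ε / Real.sqrt n / B ≤ (Fintype.card M : ℝ) :=
    (div_le_iff₀ hB0).2 (by linarith [key])
  have hpos : 0 < ε / Real.sqrt n / B := by positivity
  have hlog := Real.log_le_log hpos hcard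
  have hlogeq : Real.log (ε / Real.sqrt n / B)
      = Real.log ε - (1/2) * Real.log n
        - (((K:ℝ)+1) * Real.log (1-Q) + (((n-(K+1) : ℕ)):ℝ) * Real.log Q) := by
    rw [Real.log_div (by positivity) (ne_of_gt hB0),
        Real.log_div (ne_of_gt hε0) (ne_of_gt hsqn),
        Real.log_sqrt (by positivity), hBdef,
        Real.log_mul (by positivity) (by positivity),
        Real.log_pow, Real.log_pow]
    push_cast
    ring
  refine le_trans ?_ hlog
  rw [hlogeq]
  have hcast : (((n - (K+1) : ℕ)):ℝ) = (n:ℝ) - (K:ℝ) - 1 := by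
    have hle : K + 1 ≤ n := hKn
    rw [Nat.cast_sub hle]
    push_cast
    ring
  rw [hcast, binEnt, Real.log_div (ne_of_gt h1Q0) (ne_of_gt hQ0),
    show Real.log (1/ε) = -Real.log ε by rw [one_div, Real.log_inv]]
  ring_nf
  apply le_of_eq
  ring
end
end
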